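/- Let T be generalized hyperbolic with splitting X = M ⊕ N and Y = M + T⁻¹(N). If φ ∈ U_b(X;Y) satisfies φ(Rx) − T(φ(x)) = α(x) for all x ∈ X, where R is a uniform homeomorphism and α ∈ U_b(X), then for all x ∈ X: P_N(φ(x)) = −Σ_{k=1}^∞ T^{-k} P_N(α(R^{k-1}x)) and P_M(φ(x)) = Σ_{k=0}^∞ Tᵏ P_M(α(R^{-k-1}x)). In particular, φ is uniquely determined by α. -/

import Mathlib

open Filter Topology

/-- If the spectrum of a bounded operator on a complex Banach space is contained in the open
unit ball, then the norms of its powers decay geometrically. -/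
lemma norm_pow_le_of_spectrum_lt_one {E : Type*} [NormedAddCommGroup E] [NormedSpace ℂ E]
    [CompleteSpace E] (A : E →L[ℂ] E) (h : spectrum ℂ A ⊆ Metric.ball (0 : ℂ) 1) :
    ∃ C r : ℝ, 0 ≤ C ∧ 0 ≤ r ∧ r < 1 ∧ ∀ n : ℕ, ‖A ^ n‖ ≤ C * r ^ n := by
  have hρ : spectralRadius ℂ A < 1 := by
    rcases (spectrum ℂ A).eq_empty_or_nonempty with he | hne
    · simp [spectralRadius, he]
    · have h1 : spectralRadius ℂ A < ((1 : NNReal) : ENNReal) := by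
        refine spectrum.spectralRadius_lt_of_forall_lt_of_nonempty hne ?_
        intro z hz
        have hb := h hz
        rw [Metric.mem_ball, dist_zero_right] at hb
        exact_mod_cast hb
      simpa using h1
  obtain ⟨r, hr1, hr2⟩ := ENNReal.lt_iff_exists_nnreal_btwn.mp hρ
  have hr0 : 0 < r := by
    rcases eq_or_lt_of_le (zero_le : (0:NNReal) ≤ r) with h0 | h0
    · exfalso
      rw [← h0] at hr1
      simp at hr1
    · exact h0
  have hr1' : (r : ℝ) < 1 := by exact_mod_cast hr2
  have hG := spectrum.pow_nnnorm_pow_one_div_tendsto_nhds_spectralRadius A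
  have hev : ∀ᶠ n : ℕ in atTop, (‖A ^ n‖₊ : ENNReal) ^ (1 / (n:ℝ)) < (r : ENNReal) :=
    hG.eventually_lt_const hr1
  obtain ⟨N₀, hN₀⟩ := eventually_atTop.mp hev
  set N₁ := max N₀ 1 with hN₁
  have hbig : ∀ n, N₁ ≤ n → ‖A ^ n‖ ≤ (r:ℝ) ^ n := by
    intro n hn
    have hn0 : n ≠ 0 := by omega
    have h1 := hN₀ n (le_trans (le_max_left _ _) hn)
    have h2 : ((‖A ^ n‖₊ : ENNReal) ^ (1 / (n:ℝ))) ^ (n:ℝ) ≤ ((r:ENNReal)) ^ (n:ℝ) :=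
      ENNReal.rpow_le_rpow h1.le (by positivity)
    rw [← ENNReal.rpow_mul, one_div_mul_cancel (by exact_mod_cast hn0), ENNReal.rpow_one,
      ENNReal.rpow_natCast] at h2
    have h3 : ‖A ^ n‖₊ ≤ r ^ n := by exact_mod_cast h2
    calc ‖A ^ n‖ = (‖A ^ n‖₊ : ℝ) := rfl
    _ ≤ ((r ^ n : NNReal) : ℝ) := by exact_mod_cast h3
    _ = (r:ℝ) ^ n := by push_cast; ring
  set C : ℝ := 1 + ∑ k ∈ Finset.range N₁, ‖A ^ k‖ / (r:ℝ) ^ k with hC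
  have hC1 : (1:ℝ) ≤ C := by
    rw [hC]
    have : 0 ≤ ∑ k ∈ Finset.range N₁, ‖A ^ k‖ / (r:ℝ) ^ k :=
      Finset.sum_nonneg fun k _ => by positivity
    linarith
  refine ⟨C, r, by linarith, r.coe_nonneg, hr1', fun n => ?_⟩
  rcases lt_or_ge n N₁ with hn | hn
  · have hmem : ‖A ^ n‖ / (r:ℝ) ^ n ≤ C := by
      rw [hC]
      have h4 : ‖A ^ n‖ / (r:ℝ) ^ n ≤ ∑ k ∈ Finset.range N₁, ‖A ^ k‖ / (r:ℝ) ^ k :=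
        Finset.single_le_sum (f := fun k => ‖A ^ k‖ / (r:ℝ) ^ k)
          (fun k _ => by positivity) (Finset.mem_range.mpr hn)
      linarith
    have hrn : (0:ℝ) < (r:ℝ) ^ n := by positivity
    calc ‖A ^ n‖ = (‖A ^ n‖ / (r:ℝ) ^ n) * (r:ℝ) ^ n := by field_simp
    _ ≤ C * (r:ℝ) ^ n := mul_le_mul_of_nonneg_right hmem hrn.le
  · calc ‖A ^ n‖ ≤ (r:ℝ) ^ n := hbig n hn
    _ ≤ C * (r:ℝ) ^ n := by nlinarith [pow_nonneg r.coe_nonneg n]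

/-- Geometric decay of the powers of an operator on an invariant closed subspace on which its
restriction has spectrum inside the open unit disc. -/
lemma geom_decay {X : Type*} [NormedAddCommGroup X] [NormedSpace ℂ X] [CompleteSpace X]
    (f : X →L[ℂ] X) (N : Submodule ℂ X) (hNc : IsClosed (N : Set X))
    (hinv : ∀ x ∈ N, f x ∈ N)
    (hspec : spectrum ℂ (LinearMap.restrict (f : X →ₗ[ℂ] X) hinv) ⊆ Metric.ball (0 : ℂ) 1) :
    ∃ C r : ℝ, 0 ≤ C ∧ 0 ≤ r ∧ r < 1 ∧
      ∀ n : ℕ, ∀ x ∈ N, ‖(f ^ n) x‖ ≤ C * r ^ n * ‖x‖ := by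
  haveI : CompleteSpace N := hNc.completeSpace_coe
  set g : N →L[ℂ] N := (LinearMap.restrict (f : X →ₗ[ℂ] X) hinv).mkContinuous ‖f‖
    (fun x => by simpa using f.le_opNorm x) with hg
  have hgapp : ∀ v : N, (g v : X) = f (v : X) := fun v => rfl
  have hgpow : ∀ (n : ℕ) (v : N), ((g ^ n) v : X) = (f ^ n) (v : X) := by
    intro n
    induction n with
    | zero => intro v; simp
    | succ n ih =>
      intro v
      rw [pow_succ, pow_succ, ContinuousLinearMap.mul_apply, ContinuousLinearMap.mul_apply,
        ih (g v), hgapp]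
  have hsub : spectrum ℂ g ⊆ spectrum ℂ (LinearMap.restrict (f : X →ₗ[ℂ] X) hinv) := by
    intro z hz
    rw [spectrum.mem_iff] at hz ⊢
    intro hu
    apply hz
    rw [Module.End.isUnit_iff] at hu
    rw [ContinuousLinearMap.isUnit_iff_bijective]
    have hco : ⇑(algebraMap ℂ (N →L[ℂ] N) z - g)
        = ⇑(algebraMap ℂ (Module.End ℂ N) z - LinearMap.restrict (f : X →ₗ[ℂ] X) hinv) := by
      funext v
      simp [Module.algebraMap_end_apply, ContinuousLinearMap.algebraMap_apply]
      rfl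
    rw [hco]
    exact hu
  obtain ⟨C, r, hC, hr0, hr1, hb⟩ := norm_pow_le_of_spectrum_lt_one g (hsub.trans hspec)
  refine ⟨C, r, hC, hr0, hr1, fun n x hx => ?_⟩
  have h1 : ‖(f ^ n) x‖ = ‖(g ^ n) ⟨x, hx⟩‖ := by
    rw [← hgpow n ⟨x, hx⟩]
    rfl
  rw [h1]
  calc ‖(g ^ n) ⟨x, hx⟩‖ ≤ ‖g ^ n‖ * ‖(⟨x, hx⟩ : N)‖ := (g ^ n).le_opNorm _
  _ ≤ (C * r ^ n) * ‖x‖ := by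
      apply mul_le_mul (hb n) (le_of_eq rfl) (norm_nonneg _)
      positivity

/-- Powers of a continuous linear automorphism agree with the powers of the underlying
continuous linear map. -/
lemma clequiv_pow_apply {X : Type*} [NormedAddCommGroup X] [NormedSpace ℂ X] (e : X ≃L[ℂ] X)
    (n : ℕ) : ∀ x : X, (e ^ n) x = ((e : X →L[ℂ] X) ^ n) x := by
  induction n with
  | zero => intro x; rfl
  | succ n ih =>
    intro x
    rw [pow_succ, pow_succ]
    show (e ^ n) (e x) = _
    rw [ih (e x)]
    rfl

/-- An invertible bounded operator is generalized hyperbolic with respect to the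
splitting `X = M ⊕ N` if `M`, `N` are closed, `T(M) ⊆ M`, `T⁻¹(N) ⊆ N`,
`σ(T|_M) ⊆ 𝔻` and `σ(T⁻¹|_N) ⊆ 𝔻`. -/
def IsGeneralizedHyperbolic {X : Type*} [NormedAddCommGroup X] [NormedSpace ℂ X]
    [CompleteSpace X] (T : X ≃L[ℂ] X) (M N : Submodule ℂ X) : Prop :=
  IsClosed (M : Set X) ∧ IsClosed (N : Set X) ∧ IsCompl M N ∧
  (∃ hM : ∀ x ∈ M, T x ∈ M,
    spectrum ℂ (LinearMap.restrict ((T : X →L[ℂ] X) : X →ₗ[ℂ] X) hM) ⊆ Metric.ball (0 : ℂ) 1) ∧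
  (∃ hN : ∀ x ∈ N, T.symm x ∈ N,
    spectrum ℂ (LinearMap.restrict ((T.symm : X →L[ℂ] X) : X →ₗ[ℂ] X) hN) ⊆ Metric.ball (0 : ℂ) 1)

/-- The two series formulas for the components of a bounded solution of the cohomological
equation. -/
lemma key_formulas
    {X : Type*} [NormedAddCommGroup X] [NormedSpace ℂ X] [CompleteSpace X]
    (T : X ≃L[ℂ] X) (M N : Submodule ℂ X)
    (hGH : IsGeneralizedHyperbolic T M N)
    (PM PN : X →L[ℂ] X)
    (hPM : ∀ x, PM x ∈ M) (hPN : ∀ x, PN x ∈ N) (hP : ∀ x, PM x + PN x = x)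
    (Y : Submodule ℂ X)
    (hY : Y = M ⊔ N.comap ((T : X →L[ℂ] X) : X →ₗ[ℂ] X))
    (R : X ≃ X)
    (α : X → X) (hαbd : ∃ C, ∀ x, ‖α x‖ ≤ C)
    (φ : X → X) (hφbd : ∃ C, ∀ x, ‖φ x‖ ≤ C)
    (hφY : ∀ x, φ x ∈ Y)
    (hφeq : ∀ x, φ (R x) - T (φ x) = α x) :
    (∀ x, PN (φ x) = - ∑' k : ℕ, (T.symm ^ (k + 1)) (PN (α ((⇑R)^[k] x)))) ∧
    (∀ x, PM (φ x) = ∑' k : ℕ, (T ^ k) (PM (α ((⇑R.symm)^[k + 1] x)))) := by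
  obtain ⟨hMc, hNc, hcompl, ⟨hMinv, hMspec⟩, ⟨hNinv, hNspec⟩⟩ := hGH
  obtain ⟨Cα, hCα⟩ := hαbd
  obtain ⟨Cφ, hCφ⟩ := hφbd
  have hCα0 : 0 ≤ Cα := le_trans (norm_nonneg _) (hCα 0)
  have hCφ0 : 0 ≤ Cφ := le_trans (norm_nonneg _) (hCφ 0)
  obtain ⟨CM, rM, hCM0, hrM0, hrM1, hbM⟩ := geom_decay (T : X →L[ℂ] X) M hMc hMinv hMspec
  obtain ⟨CN, rN, hCN0, hrN0, hrN1, hbN⟩ :=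
    geom_decay (T.symm : X →L[ℂ] X) N hNc hNinv hNspec
  -- basic projection identities
  have hdisj : ∀ v, v ∈ M → v ∈ N → v = 0 := fun v hvM hvN =>
    Submodule.disjoint_def.mp hcompl.disjoint v hvM hvN
  have hPM_M : ∀ v ∈ M, PM v = v ∧ PN v = 0 := by
    intro v hv
    have h1 : PN v = 0 := by
      have hmem : PN v ∈ M := by
        have h2 : PN v = v - PM v := eq_sub_of_add_eq' (hP v)
        rw [h2]
        exact Submodule.sub_mem M hv (hPM v)
      exact hdisj _ hmem (hPN v)
    refine ⟨?_, h1⟩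
    have := hP v
    rw [h1, add_zero] at this
    exact this
  have hPN_N : ∀ v ∈ N, PN v = v ∧ PM v = 0 := by
    intro v hv
    have h1 : PM v = 0 := by
      have hmem : PM v ∈ N := by
        have h2 : PM v = v - PN v := eq_sub_of_add_eq (hP v)
        rw [h2]
        exact Submodule.sub_mem N hv (hPN v)
      exact hdisj _ (hPM v) hmem
    refine ⟨?_, h1⟩
    have := hP v
    rw [h1, zero_add] at this
    exact this
  -- structure of elements of Y
  have hYprop : ∀ y ∈ Y, PN (T y) = T (PN y) ∧ PM (T y) = T (PM y) := by
    intro y hy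
    rw [hY] at hy
    obtain ⟨m, hm, t, ht, rfl⟩ := Submodule.mem_sup.mp hy
    have hTt : T t ∈ N := Submodule.mem_comap.mp ht
    have htN : t ∈ N := by
      have h3 := hNinv _ hTt
      simpa using h3
    have hTm : T m ∈ M := hMinv m hm
    have h4 : PN (m + t) = t := by
      rw [map_add, (hPM_M m hm).2, (hPN_N t htN).1, zero_add]
    have h5 : PM (m + t) = m := by
      rw [map_add, (hPM_M m hm).1, (hPN_N t htN).2, add_zero]
    have h6 : T (m + t) = T m + T t := map_add _ _ _
    constructor
    · rw [h6, map_add, (hPM_M _ hTm).2, (hPN_N _ hTt).1, zero_add, h4]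
    · rw [h6, map_add, (hPM_M _ hTm).1, (hPN_N _ hTt).2, add_zero, h5]
  -- componentwise equations
  have heq : ∀ x, φ (R x) = T (φ x) + α x := by
    intro x
    have := hφeq x
    linear_combination (norm := abel) this
  have heqN : ∀ x, PN (φ (R x)) = T (PN (φ x)) + PN (α x) := by
    intro x
    rw [heq x, map_add, (hYprop _ (hφY x)).1]
  have heqM : ∀ x, PM (φ (R x)) = T (PM (φ x)) + PM (α x) := by
    intro x
    rw [heq x, map_add, (hYprop _ (hφY x)).2]
  constructor
  · -- N component
    have hrec : ∀ x, PN (φ x) = T.symm (PN (φ (R x))) - T.symm (PN (α x)) := by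
      intro x
      rw [heqN x, map_add, ContinuousLinearEquiv.symm_apply_apply]
      abel
    have hind : ∀ (n : ℕ) (x : X), PN (φ x) = (T.symm ^ n) (PN (φ ((⇑R)^[n] x)))
        - ∑ k ∈ Finset.range n, (T.symm ^ (k + 1)) (PN (α ((⇑R)^[k] x))) := by
      intro n
      induction n with
      | zero => intro x; simp; rfl
      | succ n ih =>
        intro x
        have h5 : PN (φ ((⇑R)^[n] x)) = T.symm (PN (φ ((⇑R)^[n+1] x)))
            - T.symm (PN (α ((⇑R)^[n] x))) := by
          rw [hrec ((⇑R)^[n] x), ← Function.iterate_succ_apply' (⇑R) n x]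
        have e1 : (T.symm ^ n) (T.symm (PN (φ ((⇑R)^[n+1] x))))
            = (T.symm ^ (n+1)) (PN (φ ((⇑R)^[n+1] x))) := by rw [pow_succ]; rfl
        have e2 : (T.symm ^ n) (T.symm (PN (α ((⇑R)^[n] x))))
            = (T.symm ^ (n+1)) (PN (α ((⇑R)^[n] x))) := by rw [pow_succ]; rfl
        rw [ih x, h5, map_sub, e1, e2, Finset.sum_range_succ]
        abel
    intro x
    set f : ℕ → X := fun k => (T.symm ^ (k + 1)) (PN (α ((⇑R)^[k] x))) with hf
    have hfb : ∀ k, ‖f k‖ ≤ (CN * (‖PN‖ * Cα) * rN) * rN ^ k := by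
      intro k
      have h6 : ‖f k‖ = ‖((T.symm : X →L[ℂ] X) ^ (k+1)) (PN (α ((⇑R)^[k] x)))‖ := by
        rw [hf]
        simp only []
        rw [clequiv_pow_apply]
      rw [h6]
      calc ‖((T.symm : X →L[ℂ] X) ^ (k+1)) (PN (α ((⇑R)^[k] x)))‖
          ≤ CN * rN ^ (k+1) * ‖PN (α ((⇑R)^[k] x))‖ := hbN (k+1) _ (hPN _)
      _ ≤ CN * rN ^ (k+1) * (‖PN‖ * Cα) := by
          apply mul_le_mul_of_nonneg_left _ (by positivity)
          calc ‖PN (α ((⇑R)^[k] x))‖ ≤ ‖PN‖ * ‖α ((⇑R)^[k] x)‖ := PN.le_opNorm _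
          _ ≤ ‖PN‖ * Cα := mul_le_mul_of_nonneg_left (hCα _) (norm_nonneg _)
      _ = (CN * (‖PN‖ * Cα) * rN) * rN ^ k := by ring
    have hsummable : Summable f :=
      Summable.of_norm_bounded
        ((summable_geometric_of_lt_one hrN0 hrN1).mul_left _) hfb
    have hpartial := hsummable.hasSum.tendsto_sum_nat
    have hzero : Tendsto (fun n : ℕ => (T.symm ^ n) (PN (φ ((⇑R)^[n] x)))) atTop (𝓝 0) := by
      apply squeeze_zero_norm (a := fun n : ℕ => (CN * (‖PN‖ * Cφ)) * rN ^ n)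
      · intro n
        have h6 : ‖(T.symm ^ n) (PN (φ ((⇑R)^[n] x)))‖
            = ‖((T.symm : X →L[ℂ] X) ^ n) (PN (φ ((⇑R)^[n] x)))‖ := by
          rw [clequiv_pow_apply]
        rw [h6]
        calc ‖((T.symm : X →L[ℂ] X) ^ n) (PN (φ ((⇑R)^[n] x)))‖
            ≤ CN * rN ^ n * ‖PN (φ ((⇑R)^[n] x))‖ := hbN n _ (hPN _)
        _ ≤ CN * rN ^ n * (‖PN‖ * Cφ) := by
            apply mul_le_mul_of_nonneg_left _ (by positivity)
            calc ‖PN (φ ((⇑R)^[n] x))‖ ≤ ‖PN‖ * ‖φ ((⇑R)^[n] x)‖ := PN.le_opNorm _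
            _ ≤ ‖PN‖ * Cφ := mul_le_mul_of_nonneg_left (hCφ _) (norm_nonneg _)
        _ = (CN * (‖PN‖ * Cφ)) * rN ^ n := by ring
      · have := (tendsto_pow_atTop_nhds_zero_of_lt_one hrN0 hrN1).const_mul
          (CN * (‖PN‖ * Cφ))
        simpa using this
    have hpartial' : Tendsto (fun n : ℕ => (T.symm ^ n) (PN (φ ((⇑R)^[n] x))) - PN (φ x))
        atTop (𝓝 (∑' k, f k)) := by
      apply hpartial.congr
      intro n
      have := hind n x
      linear_combination (norm := abel) this
    have hlim2 : Tendsto (fun n : ℕ => (T.symm ^ n) (PN (φ ((⇑R)^[n] x))) - PN (φ x))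
        atTop (𝓝 (0 - PN (φ x))) := hzero.sub_const _
    have h7 : (∑' k, f k) = 0 - PN (φ x) := tendsto_nhds_unique hpartial' hlim2
    rw [zero_sub] at h7
    rw [h7, neg_neg]
  · -- M component
    have hrec : ∀ x, PM (φ x) = T (PM (φ (R.symm x))) + PM (α (R.symm x)) := by
      intro x
      have := heqM (R.symm x)
      rwa [Equiv.apply_symm_apply] at this
    have hind : ∀ (n : ℕ) (x : X), PM (φ x) = (T ^ n) (PM (φ ((⇑R.symm)^[n] x)))
        + ∑ k ∈ Finset.range n, (T ^ k) (PM (α ((⇑R.symm)^[k + 1] x))) := by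
      intro n
      induction n with
      | zero => intro x; simp; rfl
      | succ n ih =>
        intro x
        have h5 : PM (φ ((⇑R.symm)^[n] x)) = T (PM (φ ((⇑R.symm)^[n+1] x)))
            + PM (α ((⇑R.symm)^[n+1] x)) := by
          rw [hrec ((⇑R.symm)^[n] x), ← Function.iterate_succ_apply' (⇑R.symm) n x]
        have e1 : (T ^ n) (T (PM (φ ((⇑R.symm)^[n+1] x))))
            = (T ^ (n+1)) (PM (φ ((⇑R.symm)^[n+1] x))) := by rw [pow_succ]; rfl
        rw [ih x, h5, map_add, e1, Finset.sum_range_succ]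
        abel
    intro x
    set f : ℕ → X := fun k => (T ^ k) (PM (α ((⇑R.symm)^[k + 1] x))) with hf
    have hfb : ∀ k, ‖f k‖ ≤ (CM * (‖PM‖ * Cα)) * rM ^ k := by
      intro k
      have h6 : ‖f k‖ = ‖((T : X →L[ℂ] X) ^ k) (PM (α ((⇑R.symm)^[k+1] x)))‖ := by
        rw [hf]
        simp only []
        rw [clequiv_pow_apply]
      rw [h6]
      calc ‖((T : X →L[ℂ] X) ^ k) (PM (α ((⇑R.symm)^[k+1] x)))‖
          ≤ CM * rM ^ k * ‖PM (α ((⇑R.symm)^[k+1] x))‖ := hbM k _ (hPM _)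
      _ ≤ CM * rM ^ k * (‖PM‖ * Cα) := by
          apply mul_le_mul_of_nonneg_left _ (by positivity)
          calc ‖PM (α ((⇑R.symm)^[k+1] x))‖ ≤ ‖PM‖ * ‖α ((⇑R.symm)^[k+1] x)‖ := PM.le_opNorm _
          _ ≤ ‖PM‖ * Cα := mul_le_mul_of_nonneg_left (hCα _) (norm_nonneg _)
      _ = (CM * (‖PM‖ * Cα)) * rM ^ k := by ring
    have hsummable : Summable f :=
      Summable.of_norm_bounded
        ((summable_geometric_of_lt_one hrM0 hrM1).mul_left _) hfb
    have hpartial := hsummable.hasSum.tendsto_sum_nat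
    have hzero : Tendsto (fun n : ℕ => (T ^ n) (PM (φ ((⇑R.symm)^[n] x)))) atTop (𝓝 0) := by
      apply squeeze_zero_norm (a := fun n : ℕ => (CM * (‖PM‖ * Cφ)) * rM ^ n)
      · intro n
        have h6 : ‖(T ^ n) (PM (φ ((⇑R.symm)^[n] x)))‖
            = ‖((T : X →L[ℂ] X) ^ n) (PM (φ ((⇑R.symm)^[n] x)))‖ := by
          rw [clequiv_pow_apply]
        rw [h6]
        calc ‖((T : X →L[ℂ] X) ^ n) (PM (φ ((⇑R.symm)^[n] x)))‖
            ≤ CM * rM ^ n * ‖PM (φ ((⇑R.symm)^[n] x))‖ := hbM n _ (hPM _)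
        _ ≤ CM * rM ^ n * (‖PM‖ * Cφ) := by
            apply mul_le_mul_of_nonneg_left _ (by positivity)
            calc ‖PM (φ ((⇑R.symm)^[n] x))‖ ≤ ‖PM‖ * ‖φ ((⇑R.symm)^[n] x)‖ := PM.le_opNorm _
            _ ≤ ‖PM‖ * Cφ := mul_le_mul_of_nonneg_left (hCφ _) (norm_nonneg _)
        _ = (CM * (‖PM‖ * Cφ)) * rM ^ n := by ring
      · have := (tendsto_pow_atTop_nhds_zero_of_lt_one hrM0 hrM1).const_mul
          (CM * (‖PM‖ * Cφ))
        simpa using this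
    have hpartial' : Tendsto (fun n : ℕ => PM (φ x) - (T ^ n) (PM (φ ((⇑R.symm)^[n] x))))
        atTop (𝓝 (∑' k, f k)) := by
      apply hpartial.congr
      intro n
      have := hind n x
      linear_combination (norm := abel) -this
    have hlim2 : Tendsto (fun n : ℕ => PM (φ x) - (T ^ n) (PM (φ ((⇑R.symm)^[n] x))))
        atTop (𝓝 (PM (φ x) - 0)) := tendsto_const_nhds.sub hzero
    have h7 : (∑' k, f k) = PM (φ x) - 0 := tendsto_nhds_unique hpartial' hlim2
    rw [sub_zero] at h7
    exact h7.symm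

/-- If `φ ∈ U_b(X;Y)` solves `φ(Rx) − T(φ(x)) = α(x)`, then its
components are given by the explicit series
`P_N(φ(x)) = −Σ_{k≥1} T^{-k} P_N(α(R^{k-1}x))` and
`P_M(φ(x)) = Σ_{k≥0} Tᵏ P_M(α(R^{-k-1}x))`; in particular `φ` is uniquely
determined by `α`. -/
theorem solution_formula_and_uniqueness
    {X : Type*} [NormedAddCommGroup X] [NormedSpace ℂ X] [CompleteSpace X]
    (T : X ≃L[ℂ] X) (M N : Submodule ℂ X)
    (hGH : IsGeneralizedHyperbolic T M N)
    (PM PN : X →L[ℂ] X)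
    (hPM : ∀ x, PM x ∈ M) (hPN : ∀ x, PN x ∈ N) (hP : ∀ x, PM x + PN x = x)
    (Y : Submodule ℂ X)
    (hY : Y = M ⊔ N.comap ((T : X →L[ℂ] X) : X →ₗ[ℂ] X))
    (R : X ≃ X) (hR : UniformContinuous ⇑R) (hR' : UniformContinuous ⇑R.symm)
    (α : X → X) (hα : UniformContinuous α) (hαbd : ∃ C, ∀ x, ‖α x‖ ≤ C)
    (φ : X → X) (hφuc : UniformContinuous φ) (hφbd : ∃ C, ∀ x, ‖φ x‖ ≤ C)
    (hφY : ∀ x, φ x ∈ Y)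
    (hφeq : ∀ x, φ (R x) - T (φ x) = α x) :
    (∀ x, PN (φ x) = - ∑' k : ℕ, (T.symm ^ (k + 1)) (PN (α ((⇑R)^[k] x)))) ∧
    (∀ x, PM (φ x) = ∑' k : ℕ, (T ^ k) (PM (α ((⇑R.symm)^[k + 1] x)))) ∧
    (∀ φ' : X → X, UniformContinuous φ' → (∃ C, ∀ x, ‖φ' x‖ ≤ C) →
      (∀ x, φ' x ∈ Y) → (∀ x, φ' (R x) - T (φ' x) = α x) → φ' = φ) := by
  obtain ⟨hN', hM'⟩ := key_formulas T M N hGH PM PN hPM hPN hP Y hY R α hαbd φ hφbd hφY hφeq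
  refine ⟨hN', hM', ?_⟩
  intro φ' hφ'uc hφ'bd hφ'Y hφ'eq
  obtain ⟨hN'', hM''⟩ :=
    key_formulas T M N hGH PM PN hPM hPN hP Y hY R α hαbd φ' hφ'bd hφ'Y hφ'eq
  funext x
  have h1 : PN (φ' x) = PN (φ x) := by rw [hN'' x, hN' x]
  have h2 : PM (φ' x) = PM (φ x) := by rw [hM'' x, hM' x]
  calc φ' x = PM (φ' x) + PN (φ' x) := (hP (φ' x)).symm
  _ = PM (φ x) + PN (φ x) := by rw [h1, h2]
  _ = φ x := hP (φ x)
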